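/- arXiv:1602.07072 — 4 statements merged into one kernel-verified Lean document; each statement's English description precedes it below -/
import Mathlib

section
/- Time inequality for the timelike Hilbert metric: for all p, q, r ∈ Ω with p ≺ q and q ≺ r, one has p ≺ r and H(p,q) + H(q,r) ≤ H(p,r). -/
open RealInnerProductSpace
open scoped Classical

noncomputable section

/-- Euclidean space of dimension `n`. -/
abbrev Euc (n : ℕ) := EuclideanSpace ℝ (Fin n)

/-- The exterior `Ω = E \ closure I` of the convex set `I`. -/
def Omega {n : ℕ} (I : Set (Euc n)) : Set (Euc n) := (closure I)ᶜ

/-- The timelike Funk partial order: `p < q` iff `p ≠ q`, the segment `[p,q]` lies in `Ω`,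
and the ray from `p` through `q` enters `I` beyond `q`. -/
def funkLt {n : ℕ} (I : Set (Euc n)) (p q : Euc n) : Prop :=
  p ≠ q ∧ segment ℝ p q ⊆ Omega I ∧ ∃ t > (0:ℝ), q + t • (q - p) ∈ I

/-- The parameter at which the ray from `p` through `q` first hits `closure I` (beyond `q`). -/
def funkT0 {n : ℕ} (I : Set (Euc n)) (p q : Euc n) : ℝ :=
  sInf {t : ℝ | 0 < t ∧ q + t • (q - p) ∈ closure I}

/-- The point `b(p,q)` where the ray from `p` through `q` first hits `K = frontier I`. -/
def funkB {n : ℕ} (I : Set (Euc n)) (p q : Euc n) : Euc n :=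
  q + funkT0 I p q • (q - p)

/-- The timelike Funk metric `F(p,q) = log (dist p b(p,q) / dist q b(p,q))`, with `F(p,p) = 0`. -/
def funkF {n : ℕ} (I : Set (Euc n)) (p q : Euc n) : ℝ :=
  if p = q then 0 else Real.log (dist p (funkB I p q) / dist q (funkB I p q))

/-- Supporting hyperplanes of `I`, encoded as pairs `(u, c)` with `‖u‖ = 1`:
`I ⊆ {x | ⟪u,x⟫ < c}` and `closure I` meets `{x | ⟪u,x⟫ = c}`. -/
def SuppH {n : ℕ} (I : Set (Euc n)) : Set (Euc n × ℝ) :=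
  {uc | ‖uc.1‖ = 1 ∧ I ⊆ {x | ⟪uc.1, x⟫ < uc.2} ∧
    (closure I ∩ {x | ⟪uc.1, x⟫ = uc.2}).Nonempty}

/-- `𝒫(z)`: supporting hyperplanes of `I` separating `z` from `I`. -/
def SuppHSep {n : ℕ} (I : Set (Euc n)) (z : Euc n) : Set (Euc n × ℝ) :=
  {uc | uc ∈ SuppH I ∧ uc.2 < ⟪uc.1, z⟫}

/-- `D(p)`: the cone of timelike directions at `p`. -/
def Dcone {n : ℕ} (I : Set (Euc n)) (p : Euc n) : Set (Euc n) :=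
  {v | ∃ t > (0:ℝ), p + t • v ∈ I}

/-- `τ(p,v)`: the time for the ray `p + t • v` to reach `closure I`. -/
def tauF {n : ℕ} (I : Set (Euc n)) (p v : Euc n) : ℝ :=
  sInf {t : ℝ | 0 < t ∧ p + t • v ∈ closure I}

/-- The timelike Minkowski functional `P(p,v) = 1/τ(p,v)` of the timelike Funk metric. -/
def Pmink {n : ℕ} (I : Set (Euc n)) (p v : Euc n) : ℝ := 1 / tauF I p v

/-- The domain `Ω = E \ (closure I₁ ∪ closure I₂)` of the timelike Hilbert metric. -/
def HOmega {n : ℕ} (I1 I2 : Set (Euc n)) : Set (Euc n) :=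
  (closure I1 ∪ closure I2)ᶜ

/-- The timelike Hilbert order: `p ≺ q` iff `p <₂ q` (Funk order of `I₂`) and
`q <₁ p` (Funk order of `I₁`). -/
def hilbLt {n : ℕ} (I1 I2 : Set (Euc n)) (p q : Euc n) : Prop :=
  funkLt I2 p q ∧ funkLt I1 q p

/-- The timelike Hilbert metric `H(p,q) = F₂(p,q) + F₁(q,p)` (with `H(p,p) = 0`). -/
def hilbH {n : ℕ} (I1 I2 : Set (Euc n)) (p q : Euc n) : ℝ :=
  funkF I2 p q + funkF I1 q p

section Aux

variable {n : ℕ}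

lemma line_eval (f : Euc n →L[ℝ] ℝ) (p q : Euc n) (t : ℝ) :
    f (q + t • (q - p)) = f q + t * (f q - f p) := by
  simp only [map_add, map_smul, map_sub, smul_eq_mul]

lemma funkLt_left_not_mem {I : Set (Euc n)} {p q : Euc n} (h : funkLt I p q) :
    p ∉ closure I := h.2.1 (left_mem_segment ℝ p q)

lemma funkLt_right_not_mem {I : Set (Euc n)} {p q : Euc n} (h : funkLt I p q) :
    q ∉ closure I := h.2.1 (right_mem_segment ℝ p q)

lemma funkT0_spec {I : Set (Euc n)} (hI : IsOpen I) {p q : Euc n} (h : funkLt I p q) :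
    0 < funkT0 I p q ∧ funkB I p q ∈ closure I ∧ funkB I p q ∉ I ∧
      ∀ t : ℝ, 0 < t → q + t • (q - p) ∈ I → funkT0 I p q < t := by
  obtain ⟨hne, hseg, t1, ht1, hmem⟩ := h
  have hqI : q ∉ closure I := hseg (right_mem_segment ℝ p q)
  have hc : Continuous fun t : ℝ => q + t • (q - p) := by continuity
  set S := {t : ℝ | 0 < t ∧ q + t • (q - p) ∈ closure I} with hS
  have hSeq : S = ((fun t : ℝ => q + t • (q - p)) ⁻¹' closure I) ∩ Set.Ici 0 := by
    ext t
    constructor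
    · rintro ⟨h1, h2⟩; exact ⟨h2, le_of_lt h1⟩
    · rintro ⟨h1, h2⟩
      rcases eq_or_lt_of_le (Set.mem_Ici.mp h2) with hh | hh
      · exfalso; apply hqI; simpa [← hh] using h1
      · exact ⟨hh, h1⟩
  have hSclosed : IsClosed S := by
    rw [hSeq]; exact (isClosed_closure.preimage hc).inter isClosed_Ici
  have hSne : S.Nonempty := ⟨t1, ht1, subset_closure hmem⟩
  have hSbdd : BddBelow S := ⟨0, fun t ht => le_of_lt ht.1⟩
  have hmemS : funkT0 I p q ∈ S := hSclosed.csInf_mem hSne hSbdd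
  have ht0 : 0 < funkT0 I p q := hmemS.1
  have hbcl : funkB I p q ∈ closure I := hmemS.2
  have hnotI : funkB I p q ∉ I := by
    intro hb
    have hnb : (fun t : ℝ => q + t • (q - p)) ⁻¹' I ∈ nhds (funkT0 I p q) :=
      (hI.preimage hc).mem_nhds hb
    obtain ⟨ε, hε, hball⟩ := Metric.mem_nhds_iff.1 hnb
    set t0 := funkT0 I p q
    set t' := t0 - min (ε / 2) (t0 / 2) with ht'
    have hm1 : min (ε / 2) (t0 / 2) ≤ t0 / 2 := min_le_right _ _
    have hm0 : 0 < min (ε / 2) (t0 / 2) := lt_min (by linarith) (by linarith)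
    have h1 : 0 < t' := by rw [ht']; linarith
    have h2 : t' < t0 := by rw [ht']; linarith
    have h3 : t' ∈ Metric.ball t0 ε := by
      rw [Metric.mem_ball, Real.dist_eq, ht']
      rw [abs_of_nonpos (by linarith [hm0] : t0 - min (ε / 2) (t0 / 2) - t0 ≤ 0)]
      have := min_le_left (ε / 2) (t0 / 2)
      simp only [neg_sub]
      linarith
    have : t' ∈ S := ⟨h1, subset_closure (hball h3)⟩
    exact absurd (csInf_le hSbdd this) (not_le.2 h2)
  refine ⟨ht0, hbcl, hnotI, fun t ht htI => ?_⟩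
  have hle : funkT0 I p q ≤ t := csInf_le hSbdd ⟨ht, subset_closure htI⟩
  rcases lt_or_eq_of_le hle with hh | hh
  · exact hh
  · exfalso; apply hnotI; rw [funkB, hh]; exact htI

lemma funkF_eq {I : Set (Euc n)} {p q : Euc n} (hne : p ≠ q) (ht0 : 0 < funkT0 I p q) :
    funkF I p q = Real.log ((1 + funkT0 I p q) / funkT0 I p q) := by
  rw [funkF, if_neg hne]
  congr 1
  rw [funkB]
  set t0 := funkT0 I p q
  have hqp : ‖q - p‖ ≠ 0 := by
    simp only [norm_ne_zero_iff, sub_ne_zero]; exact fun hh => hne hh.symm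
  have h1 : dist p (q + t0 • (q - p)) = (1 + t0) * ‖q - p‖ := by
    rw [dist_eq_norm]
    have he : p - (q + t0 • (q - p)) = -((1 + t0) • (q - p)) := by module
    rw [he, norm_neg, norm_smul, Real.norm_eq_abs, abs_of_pos (by linarith)]
  have h2 : dist q (q + t0 • (q - p)) = t0 * ‖q - p‖ := by
    rw [dist_eq_norm]
    have he : q - (q + t0 • (q - p)) = -(t0 • (q - p)) := by module
    rw [he, norm_neg, norm_smul, Real.norm_eq_abs, abs_of_pos ht0]
  rw [h1, h2, mul_div_mul_right _ _ hqp]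

end Aux
section Aux2

variable {n : ℕ}

lemma funk_le_log {I : Set (Euc n)} (hI : IsOpen I) {p q : Euc n} (h : funkLt I p q)
    (f : Euc n →L[ℝ] ℝ) (c : ℝ) (hfc : ∀ x ∈ I, f x < c) (hq : c < f q) :
    f q < f p ∧ funkF I p q ≤ Real.log ((f p - c) / (f q - c)) := by
  obtain ⟨ht0, hbcl, -, -⟩ := funkT0_spec hI h
  set t0 := funkT0 I p q with ht0def
  obtain ⟨t, ht, htI⟩ := h.2.2
  have h1 : f (q + t • (q - p)) < c := hfc _ htI
  rw [line_eval] at h1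
  have hqp : f q < f p := by nlinarith
  have hb : f (funkB I p q) ≤ c := by
    have hcl : closure I ⊆ {x | f x ≤ c} :=
      closure_minimal (fun x hx => le_of_lt (hfc x hx))
        (isClosed_le f.continuous continuous_const)
    exact hcl hbcl
  rw [funkB, ← ht0def, line_eval] at hb
  have key : (1 + t0) / t0 ≤ (f p - c) / (f q - c) := by
    rw [div_le_div_iff₀ ht0 (by linarith)]
    nlinarith
  refine ⟨hqp, ?_⟩
  rw [funkF_eq h.1 ht0]
  exact Real.log_le_log (by positivity) key

lemma funk_eq_log {I : Set (Euc n)} (hI : IsOpen I) {p r : Euc n} (h : funkLt I p r)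
    (f : Euc n →L[ℝ] ℝ) (c : ℝ) (hfc : ∀ x ∈ I, f x < c)
    (hbc : f (funkB I p r) = c) :
    c < f r ∧ funkF I p r = Real.log ((f p - c) / (f r - c)) := by
  obtain ⟨ht0, hbcl, hbI, hlt⟩ := funkT0_spec hI h
  set t0 := funkT0 I p r with ht0def
  obtain ⟨t, ht, htI⟩ := h.2.2
  have h1 : f (r + t • (r - p)) < c := hfc _ htI
  rw [line_eval] at h1
  rw [funkB, ← ht0def, line_eval] at hbc
  have htgt : t0 < t := hlt t ht htI
  have hrp : f r < f p := by nlinarith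
  have hcr : c < f r := by nlinarith
  have key : (1 + t0) / t0 = (f p - c) / (f r - c) := by
    rw [div_eq_div_iff (ne_of_gt ht0) (by linarith : f r - c ≠ 0)]
    nlinarith
  rw [funkF_eq h.1 ht0, key]
  exact ⟨hcr, rfl⟩

lemma funkLt_trans {I : Set (Euc n)} (hI : IsOpen I) (hconv : Convex ℝ I)
    {p q r : Euc n} (hpq : funkLt I p q) (hqr : funkLt I q r) : funkLt I p r := by
  obtain ⟨hpq1, hpq2, s, hs, hsI⟩ := hpq
  obtain ⟨hqr1, hqr2, t, ht, htI⟩ := hqr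
  have hpcl : p ∉ closure I := hpq2 (left_mem_segment ℝ p q)
  have hrcl : r ∉ closure I := hqr2 (right_mem_segment ℝ q r)
  have hD : (0:ℝ) < 1 + s + t := by linarith
  have hD0 : (1 + s + t : ℝ) ≠ 0 := ne_of_gt hD
  set w := s * t / (1 + s + t) with hw
  have hwpos : 0 < w := by positivity
  have hx : r + w • (r - p) ∈ I := by
    have hcomb := hconv hsI htI
      (le_of_lt (show (0:ℝ) < t / (1 + s + t) by positivity))
      (le_of_lt (show (0:ℝ) < (1 + s) / (1 + s + t) by positivity))
      (by rw [← add_div, show t + (1 + s) = 1 + s + t by ring, div_self hD0])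
    convert hcomb using 1
    rw [hw]
    match_scalars
    · field_simp; ring
    · field_simp
    · field_simp; ring
  have hpr : p ≠ r := by
    rintro rfl
    exact hpcl (subset_closure (by simpa using hx))
  have hseg : segment ℝ p r ⊆ Omega I := by
    intro z hz
    simp only [Omega, Set.mem_compl_iff]
    intro hzcl
    obtain ⟨a, b, ha, hb, hab, hzeq⟩ := hz
    have hble : b ≤ 1 := by linarith
    have hb1 : b < 1 := by
      rcases eq_or_lt_of_le hble with hh | hh
      · exfalso
        apply hrcl
        have ha0 : a = 0 := by linarith
        rw [ha0, hh] at hzeq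
        simp only [zero_smul, one_smul, zero_add] at hzeq
        rwa [← hzeq] at hzcl
      · exact hh
    have hden : (0:ℝ) < 1 + w - b := by linarith
    have hden0 : (1 + w - b : ℝ) ≠ 0 := ne_of_gt hden
    have hxint : r + w • (r - p) ∈ interior (closure I) :=
      interior_maximal subset_closure hI hx
    have ha' : a = 1 - b := by linarith
    have hreq : (w / (1 + w - b)) • z + ((1 - b) / (1 + w - b)) • (r + w • (r - p)) = r := by
      rw [← hzeq, ha']
      match_scalars <;> (try field_simp) <;> (first | ring | (left; ring) | tauto)
    have hro : r ∈ openSegment ℝ z (r + w • (r - p)) :=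
      ⟨w / (1 + w - b), (1 - b) / (1 + w - b), div_pos hwpos hden, div_pos (by linarith) hden,
        by rw [← add_div, show w + (1 - b) = 1 + w - b by ring, div_self hden0], hreq⟩
    have hrint : r ∈ interior (closure I) :=
      hconv.closure.openSegment_closure_interior_subset_interior
        (subset_closure hzcl) hxint hro
    exact hrcl (interior_subset hrint)
  exact ⟨hpr, hseg, w, hwpos, hx⟩

end Aux2
lemma funk_time {n : ℕ} {I : Set (Euc n)} (hI : IsOpen I) (hconv : Convex ℝ I)
    {p q r : Euc n} (hpq : funkLt I p q) (hqr : funkLt I q r) :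
    funkLt I p r ∧ funkF I p q + funkF I q r ≤ funkF I p r := by
  have hpr := funkLt_trans hI hconv hpq hqr
  refine ⟨hpr, ?_⟩
  obtain ⟨ht0, hbcl, hbI, -⟩ := funkT0_spec hI hpr
  obtain ⟨f, hf⟩ := geometric_hahn_banach_open_point hconv hI hbI
  set c := f (funkB I p r) with hc
  obtain ⟨hcr, heq⟩ := funk_eq_log hI hpr f c hf rfl
  have hcq : c < f q := by
    obtain ⟨t, ht, htI⟩ := hqr.2.2
    have h1 : f (r + t • (r - q)) < c := hf _ htI
    rw [line_eval] at h1
    nlinarith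
  obtain ⟨hqp, h2⟩ := funk_le_log hI hpq f c hf hcq
  obtain ⟨hrq, h3⟩ := funk_le_log hI hqr f c hf hcr
  have hpos1 : (0:ℝ) < f p - c := by linarith
  have hpos2 : (0:ℝ) < f q - c := by linarith
  have hpos3 : (0:ℝ) < f r - c := by linarith
  have hsum : Real.log ((f p - c) / (f q - c)) + Real.log ((f q - c) / (f r - c)) =
      Real.log ((f p - c) / (f r - c)) := by
    rw [← Real.log_mul (ne_of_gt (div_pos hpos1 hpos2)) (ne_of_gt (div_pos hpos2 hpos3))]
    congr 1
    field_simp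
  rw [heq, ← hsum]
  linarith

/-- time inequality for the timelike Hilbert metric: if `p ≺ q` and
`q ≺ r`, then `p ≺ r` and `H(p,q) + H(q,r) ≤ H(p,r)`. -/
theorem hilbH_time_inequality {n : ℕ} (hn : 1 ≤ n) (I1 I2 : Set (Euc n))
    (hne1 : I1.Nonempty) (hop1 : IsOpen I1) (hconv1 : Convex ℝ I1)
    (hne2 : I2.Nonempty) (hop2 : IsOpen I2) (hconv2 : Convex ℝ I2)
    (hdisj : Disjoint (closure I1) (closure I2))
    (p q r : Euc n)
    (hp : p ∈ HOmega I1 I2) (hq : q ∈ HOmega I1 I2) (hr : r ∈ HOmega I1 I2)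
    (hpq : hilbLt I1 I2 p q) (hqr : hilbLt I1 I2 q r) :
    hilbLt I1 I2 p r ∧ hilbH I1 I2 p q + hilbH I1 I2 q r ≤ hilbH I1 I2 p r := by
  obtain ⟨hpq2, hqp1⟩ := hpq
  obtain ⟨hqr2, hrq1⟩ := hqr
  obtain ⟨hpr2, h2⟩ := funk_time hop2 hconv2 hpq2 hqr2
  obtain ⟨hrp1, h1⟩ := funk_time hop1 hconv1 hrq1 hqp1
  refine ⟨⟨hpr2, hrp1⟩, ?_⟩
  simp only [hilbH]
  linarith
end
end

section
/- Euclidean segments are geodesics of the timelike Hilbert metric: for all p, q, r ∈ Ω with p ≺ q, q ≺ r, and q ∈ openSegment ℝ p r (i.e. p, q, r collinear with q strictly between p and r), the time inequality is an equality: H(p,q) + H(q,r) = H(p,r). -/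
open RealInnerProductSpace
open scoped Classical

noncomputable section

lemma sInf_image_affine (c d : ℝ) (hc : 0 < c) (S : Set ℝ) (hne : S.Nonempty)
    (hbd : BddBelow S) :
    sInf ((fun u => c * u + d) '' S) = c * sInf S + d := by
  obtain ⟨m, hm⟩ := hbd
  have hbdi : BddBelow ((fun u => c * u + d) '' S) := by
    refine ⟨c * m + d, ?_⟩
    rintro y ⟨u, hu, rfl⟩
    have := hm hu
    simp only
    nlinarith
  have hnei : ((fun u => c * u + d) '' S).Nonempty := hne.image _
  refine le_antisymm ?_ ?_
  · have h1 : ∀ u ∈ S, (sInf ((fun u => c * u + d) '' S) - d) / c ≤ u := by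
      intro u hu
      have h2 : sInf ((fun u => c * u + d) '' S) ≤ c * u + d :=
        csInf_le hbdi ⟨u, hu, rfl⟩
      rw [div_le_iff₀ hc]
      linarith
    have h3 := le_csInf hne h1
    rw [div_le_iff₀ hc] at h3
    linarith
  · refine le_csInf hnei ?_
    rintro y ⟨u, hu, rfl⟩
    have := csInf_le ⟨m, hm⟩ hu
    simp only
    nlinarith

lemma funkF_add {n : ℕ} (I : Set (Euc n)) (p q r : Euc n)
    (hpq : funkLt I p q) (hqr : funkLt I q r) (hseg : q ∈ openSegment ℝ p r) :
    funkF I p q + funkF I q r = funkF I p r := by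
  obtain ⟨a, b, ha, hb, hab, hqeq⟩ := hseg
  have haeq : a = 1 - b := by linarith
  subst haeq
  set v := r - p with hv
  have hpr : p ≠ r := by
    rintro rfl
    have : q = p := by rw [← hqeq, ← add_smul]; norm_num
    exact hpq.1 this.symm
  have hvne : v ≠ 0 := sub_ne_zero.mpr (Ne.symm hpr)
  have hbne : (1 - b) ≠ 0 := ne_of_gt ha
  have hbne' : b ≠ 0 := ne_of_gt hb
  have hpv : p = q - b • v := by rw [← hqeq, hv]; module
  have hrv : r = q + (1 - b) • v := by rw [← hqeq, hv]; module
  have hqp : q - p = b • v := by rw [hpv]; module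
  have hrq : r - q = (1 - b) • v := by
    rw [hrv]; module
  set S := {u : ℝ | 0 < u ∧ q + u • v ∈ closure I} with hS
  have hSgt : ∀ u ∈ S, 1 - b < u := by
    rintro u ⟨hu0, humem⟩
    by_contra hle
    push_neg at hle
    have hmem : q + u • v ∈ segment ℝ q r := by
      rw [segment_eq_image']
      refine ⟨u / (1 - b), ⟨by positivity, by rw [div_le_one ha]; exact hle⟩, ?_⟩
      show q + (u / (1 - b)) • (r - q) = q + u • v
      rw [hrq, smul_smul, div_mul_cancel₀ _ hbne]
    exact (hqr.2.1 hmem) humem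
  have hSne : S.Nonempty := by
    obtain ⟨t, ht0, htm⟩ := hqr.2.2
    refine ⟨(1 - b) * (1 + t), by nlinarith, ?_⟩
    rw [show q + ((1 - b) * (1 + t)) • v = r + t • (r - q) from by
      rw [hrq, hrv]; module]
    exact subset_closure htm
  have hbdd : BddBelow S := ⟨0, fun u hu => hu.1.le⟩
  set T := sInf S with hT
  have hTge : 1 - b ≤ T := le_csInf hSne fun u hu => (hSgt u hu).le
  have hTmem : q + T • v ∈ closure I := by
    have h1 : T ∈ closure S := csInf_mem_closure hSne hbdd
    have h2 : IsClosed {u : ℝ | q + u • v ∈ closure I} :=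
      IsClosed.preimage (continuous_const.add (continuous_id.smul continuous_const)) isClosed_closure
    exact closure_minimal (fun u hu => hu.2) h2 h1
  have hrnotin : r ∉ closure I := hqr.2.1 (right_mem_segment ℝ q r)
  have hqnotin : q ∉ closure I := hqr.2.1 (left_mem_segment ℝ q r)
  have hpnotin : p ∉ closure I := hpq.2.1 (left_mem_segment ℝ p q)
  have hTa : 1 - b < T := by
    rcases lt_or_eq_of_le hTge with h | h
    · exact h
    · exfalso; apply hrnotin; rw [hrv, h]; exact hTmem
  have hT0 : 0 < T := ha.trans_le hTge
  -- the three funkT0 computations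
  have hA1 : {t : ℝ | 0 < t ∧ q + t • (q - p) ∈ closure I} = (fun u => b⁻¹ * u + 0) '' S := by
    ext t
    simp only [Set.mem_setOf_eq, Set.mem_image, hS]
    constructor
    · rintro ⟨ht0, htm⟩
      refine ⟨b * t, ⟨by positivity, ?_⟩, by field_simp; ring⟩
      rw [show q + (b * t) • v = q + t • (q - p) from by rw [hqp]; module]
      exact htm
    · rintro ⟨u, ⟨hu0, hum⟩, rfl⟩
      refine ⟨by have := mul_pos (inv_pos.mpr hb) hu0; linarith, ?_⟩
      rw [show q + (b⁻¹ * u + 0) • (q - p) = q + u • v from by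
        rw [hqp]; match_scalars <;> field_simp <;> ring]
      exact hum
  have hA2 : {t : ℝ | 0 < t ∧ r + t • (r - q) ∈ closure I}
      = (fun u => (1 - b)⁻¹ * u + (-1)) '' S := by
    ext t
    simp only [Set.mem_setOf_eq, Set.mem_image, hS]
    constructor
    · rintro ⟨ht0, htm⟩
      refine ⟨(1 - b) * (1 + t), ⟨by nlinarith, ?_⟩, by field_simp; ring⟩
      rw [show q + ((1 - b) * (1 + t)) • v = r + t • (r - q) from by
        rw [hrq, hrv]; module]
      exact htm
    · rintro ⟨u, ⟨hu0, hum⟩, rfl⟩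
      have hua := hSgt u ⟨hu0, hum⟩
      have hpos : 0 < (1 - b)⁻¹ * u + (-1) := by
        have h1 : (1 - b)⁻¹ * (1 - b) < (1 - b)⁻¹ * u :=
          mul_lt_mul_of_pos_left hua (inv_pos.mpr ha)
        rw [inv_mul_cancel₀ hbne] at h1
        linarith
      refine ⟨hpos, ?_⟩
      rw [show r + ((1 - b)⁻¹ * u + (-1)) • (r - q) = q + u • v from by
        rw [hrq, hrv]; match_scalars <;> field_simp <;> ring]
      exact hum
  have hA3 : {t : ℝ | 0 < t ∧ r + t • (r - p) ∈ closure I}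
      = (fun u => 1 * u + (-(1 - b))) '' S := by
    ext t
    simp only [Set.mem_setOf_eq, Set.mem_image, hS]
    constructor
    · rintro ⟨ht0, htm⟩
      refine ⟨(1 - b) + t, ⟨by linarith, ?_⟩, by ring⟩
      rw [show q + ((1 - b) + t) • v = r + t • (r - p) from by rw [← hv, hrv]; module]
      exact htm
    · rintro ⟨u, ⟨hu0, hum⟩, rfl⟩
      have hua := hSgt u ⟨hu0, hum⟩
      refine ⟨by linarith, ?_⟩
      rw [show r + (1 * u + (-(1 - b))) • (r - p) = q + u • v from by
        rw [← hv, hrv]; module]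
      exact hum
  have hT1 : funkT0 I p q = b⁻¹ * T + 0 := by
    rw [funkT0, hA1, sInf_image_affine _ _ (inv_pos.mpr hb) S hSne hbdd]
  have hT2 : funkT0 I q r = (1 - b)⁻¹ * T + (-1) := by
    rw [funkT0, hA2, sInf_image_affine _ _ (inv_pos.mpr ha) S hSne hbdd]
  have hT3 : funkT0 I p r = 1 * T + (-(1 - b)) := by
    rw [funkT0, hA3, sInf_image_affine _ _ one_pos S hSne hbdd]
  have hB1 : funkB I p q = q + T • v := by
    rw [funkB, hT1, hqp]; match_scalars <;> field_simp <;> ring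
  have hB2 : funkB I q r = q + T • v := by
    rw [funkB, hT2, hrq, hrv]; match_scalars <;> field_simp <;> ring
  have hB3 : funkB I p r = q + T • v := by
    rw [funkB, hT3, ← hv, hrv]; module
  set b0 := q + T • v with hb0
  have hdp : dist p b0 ≠ 0 := dist_ne_zero.mpr (fun h => hpnotin (by rw [h]; exact hTmem))
  have hdq : dist q b0 ≠ 0 := dist_ne_zero.mpr (fun h => hqnotin (by rw [h]; exact hTmem))
  have hdr : dist r b0 ≠ 0 := dist_ne_zero.mpr (fun h => hrnotin (by rw [h]; exact hTmem))
  rw [funkF, funkF, funkF, if_neg hpq.1, if_neg hqr.1, if_neg hpr, hB1, hB2, hB3,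
    Real.log_div hdp hdq, Real.log_div hdq hdr, Real.log_div hdp hdr]
  ring

/-- Euclidean segments are geodesics of the timelike Hilbert metric:
if `p ≺ q`, `q ≺ r` and `q` lies strictly between `p` and `r` on a Euclidean segment,
then the time inequality is an equality. -/
theorem hilbH_add_eq_of_openSegment {n : ℕ} (hn : 1 ≤ n) (I1 I2 : Set (Euc n))
    (hne1 : I1.Nonempty) (hop1 : IsOpen I1) (hconv1 : Convex ℝ I1)
    (hne2 : I2.Nonempty) (hop2 : IsOpen I2) (hconv2 : Convex ℝ I2)
    (hdisj : Disjoint (closure I1) (closure I2))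
    (p q r : Euc n)
    (hp : p ∈ HOmega I1 I2) (hq : q ∈ HOmega I1 I2) (hr : r ∈ HOmega I1 I2)
    (hpq : hilbLt I1 I2 p q) (hqr : hilbLt I1 I2 q r)
    (hseg : q ∈ openSegment ℝ p r) :
    hilbH I1 I2 p q + hilbH I1 I2 q r = hilbH I1 I2 p r := by
  have hseg' : q ∈ openSegment ℝ r p := by rw [openSegment_symm]; exact hseg
  have h2 := funkF_add I2 p q r hpq.1 hqr.1 hseg
  have h1 := funkF_add I1 r q p hqr.2 hpq.2 hseg'
  simp only [hilbH]
  linarith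
end
end

section
/- The timelike Hilbert metric is the timelike Finsler metric of the functional P_H(p,v) = P₂(p,v) + P₁(p,−v): for p, q ∈ Ω with p ≺ q, along the straight segment σ(t) = p + t • (q − p) one has q − p ∈ D₂(σ(t)) and p − q ∈ D₁(σ(t)) for every t ∈ [0,1], and ∫₀¹ P_H(σ(t), q − p) dt = H(p,q); moreover, for every C¹ curve γ : [0,1] → Ω with γ(0) = p, γ(1) = q and γ'(t) ∈ D₂(γ(t)) ∩ (−D₁(γ(t))) for all t ∈ [0,1], ∫₀¹ P_H(γ(t), γ'(t)) dt ≤ H(p,q). -/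
open RealInnerProductSpace
open scoped Classical

noncomputable section

/-- The timelike Minkowski functional of the timelike Hilbert metric:
`P_H(p,v) = P₂(p,v) + P₁(p,−v)`. -/
def hilbP {n : ℕ} (I1 I2 : Set (Euc n)) (p v : Euc n) : ℝ :=
  Pmink I2 p v + Pmink I1 p (-v)

section AuxLemmas

variable {n : ℕ}

lemma tau_spec {I : Set (Euc n)} {p v : Euc n} (hp : p ∉ closure I)
    (hv : ∃ t : ℝ, 0 < t ∧ p + t • v ∈ closure I) :
    0 < tauF I p v ∧ p + tauF I p v • v ∈ closure I ∧
      ∀ t : ℝ, 0 < t → t < tauF I p v → p + t • v ∉ closure I := by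
  set C := {t : ℝ | p + t • v ∈ closure I} with hC
  have hCc : IsClosed C := isClosed_closure.preimage (by continuity)
  have h0 : (0:ℝ) ∉ C := by simpa [hC] using hp
  obtain ⟨δ, hδ, hball⟩ : ∃ δ > 0, Metric.ball (0:ℝ) δ ⊆ Cᶜ :=
    Metric.isOpen_iff.mp hCc.isOpen_compl 0 h0
  have hSeq : {t : ℝ | 0 < t ∧ p + t • v ∈ closure I} = Set.Ici δ ∩ C := by
    ext t
    constructor
    · rintro ⟨ht, htC⟩
      refine ⟨?_, htC⟩
      by_contra h
      simp only [Set.mem_Ici, not_le] at h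
      have h' : t < δ := by simpa [Set.mem_Ici] using h
      refine hball ?_ htC
      rw [Metric.mem_ball, Real.dist_eq, sub_zero, abs_lt]
      constructor <;> linarith
    · rintro ⟨h1, h2⟩
      exact ⟨lt_of_lt_of_le hδ h1, h2⟩
  have hNe : {t : ℝ | 0 < t ∧ p + t • v ∈ closure I}.Nonempty := hv
  have hBdd : BddBelow {t : ℝ | 0 < t ∧ p + t • v ∈ closure I} :=
    ⟨0, fun t ht => le_of_lt ht.1⟩
  have hCl : IsClosed {t : ℝ | 0 < t ∧ p + t • v ∈ closure I} := by
    rw [hSeq]; exact isClosed_Ici.inter hCc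
  have hmem : tauF I p v ∈ {t : ℝ | 0 < t ∧ p + t • v ∈ closure I} :=
    hCl.csInf_mem hNe hBdd
  refine ⟨hmem.1, hmem.2, ?_⟩
  intro t ht htlt hc
  exact absurd (csInf_le hBdd ⟨ht, hc⟩) (not_le.mpr htlt)

lemma tau_eq {I : Set (Euc n)} {p v : Euc n} {a : ℝ} (ha : 0 < a)
    (hmem : p + a • v ∈ closure I)
    (hlt : ∀ t : ℝ, 0 < t → t < a → p + t • v ∉ closure I) : tauF I p v = a := by
  have hBdd : BddBelow {t : ℝ | 0 < t ∧ p + t • v ∈ closure I} :=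
    ⟨0, fun t ht => le_of_lt ht.1⟩
  refine le_antisymm (csInf_le hBdd ⟨ha, hmem⟩) (le_csInf ⟨a, ha, hmem⟩ ?_)
  rintro t ⟨ht, htC⟩
  by_contra h
  push_neg at h
  exact hlt t ht h htC

lemma funk_setup {I : Set (Euc n)} (hop : IsOpen I) {p q : Euc n} (h : funkLt I p q) :
    0 < funkT0 I p q ∧ funkB I p q ∈ closure I ∧ funkB I p q ∉ I ∧
      (∃ t₁ : ℝ, funkT0 I p q < t₁ ∧ q + t₁ • (q - p) ∈ I) ∧
      ∀ u : ℝ, 0 < u → u < 1 + funkT0 I p q → p + u • (q - p) ∉ closure I := by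
  obtain ⟨hne, hseg, t₁, ht₁, hmem⟩ := h
  have hq : q ∉ closure I := hseg (right_mem_segment ℝ p q)
  have hT0 : funkT0 I p q = tauF I q (q - p) := rfl
  obtain ⟨hpos, hbmem, hmin⟩ :=
    tau_spec (I := I) (p := q) (v := q - p) hq ⟨t₁, ht₁, subset_closure hmem⟩
  rw [← hT0] at hpos hbmem hmin
  have hbB : funkB I p q = q + funkT0 I p q • (q - p) := rfl
  have hbI : funkB I p q ∉ I := by
    intro hbin
    have hcont : Continuous (fun t : ℝ => q + t • (q - p)) := by continuity
    have hev : ∀ᶠ t in nhds (funkT0 I p q), q + t • (q - p) ∈ I := by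
      have : I ∈ nhds (q + funkT0 I p q • (q - p)) := hop.mem_nhds (by rwa [← hbB])
      exact hcont.continuousAt.preimage_mem_nhds this
    have hev2 : ∀ᶠ t in nhdsWithin (funkT0 I p q) (Set.Iio (funkT0 I p q)),
        q + t • (q - p) ∈ I ∧ 0 < t ∧ t < funkT0 I p q := by
      filter_upwards [nhdsWithin_le_nhds hev,
        nhdsWithin_le_nhds (eventually_gt_nhds hpos), self_mem_nhdsWithin] with t h1 h2 h3
      exact ⟨h1, h2, h3⟩
    obtain ⟨t, h1, h2, h3⟩ := hev2.exists
    exact hmin t h2 h3 (subset_closure h1)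
  have ht₁' : funkT0 I p q < t₁ := by
    rcases lt_or_ge (funkT0 I p q) t₁ with h | h
    · exact h
    rcases eq_or_lt_of_le h with h | h
    · exact absurd (by rw [hbB, ← h]; exact hmem) hbI
    · exact absurd (subset_closure hmem) (hmin t₁ ht₁ h)
  refine ⟨hpos, hbmem, hbI, ⟨t₁, ht₁', hmem⟩, ?_⟩
  intro u hu0 hu
  rcases le_or_gt u 1 with h | h
  · intro hc
    have : p + u • (q - p) ∈ segment ℝ p q := by
      rw [segment_eq_image' ℝ p q]
      exact ⟨u, ⟨le_of_lt hu0, h⟩, rfl⟩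
    exact hseg this hc
  · have hid : p + u • (q - p) = q + (u - 1) • (q - p) := by module
    rw [hid]
    exact hmin (u - 1) (by linarith) (by linarith)

lemma funkF_val {I : Set (Euc n)} (hop : IsOpen I) {p q : Euc n} (h : funkLt I p q) :
    funkF I p q = Real.log (1 + funkT0 I p q) - Real.log (funkT0 I p q) := by
  have hne := h.1
  have hτ : 0 < funkT0 I p q := (funk_setup hop h).1
  have hqp : q - p ≠ 0 := sub_ne_zero.mpr (Ne.symm hne)
  have hN : (0:ℝ) < ‖q - p‖ := norm_pos_iff.mpr hqp
  rw [funkF, if_neg hne]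
  have h1 : p - funkB I p q = -((1 + funkT0 I p q) • (q - p)) := by
    rw [funkB]; module
  have h2 : q - funkB I p q = -(funkT0 I p q • (q - p)) := by
    rw [funkB]; module
  rw [dist_eq_norm, dist_eq_norm, h1, h2, norm_neg, norm_neg, norm_smul, norm_smul,
    Real.norm_eq_abs, Real.norm_eq_abs, abs_of_pos (by linarith), abs_of_pos hτ]
  rw [mul_div_mul_right _ _ (ne_of_gt hN), Real.log_div (by positivity) (ne_of_gt hτ)]

lemma hyper {I : Set (Euc n)} (hop : IsOpen I) (hconv : Convex ℝ I) {p q : Euc n}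
    (h : funkLt I p q) :
    ∃ f : Euc n →L[ℝ] ℝ, (∀ x ∈ I, f x < f (funkB I p q)) ∧
      (∀ x ∈ closure I, f x ≤ f (funkB I p q)) ∧ f (q - p) < 0 := by
  obtain ⟨hτ, hbc, hbI, ⟨t₁, ht₁, hm⟩, h7⟩ := funk_setup hop h
  obtain ⟨f, hf⟩ := geometric_hahn_banach_open_point hconv hop hbI
  refine ⟨f, hf, ?_, ?_⟩
  · intro x hx
    have hsub : I ⊆ {x | f x ≤ f (funkB I p q)} := fun a ha => le_of_lt (hf a ha)
    exact closure_minimal hsub (isClosed_le f.continuous continuous_const) hx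
  · have hlt := hf _ hm
    rw [show funkB I p q = q + funkT0 I p q • (q - p) from rfl] at hlt
    simp only [map_add, map_smul, smul_eq_mul] at hlt
    nlinarith [hlt, ht₁]

lemma pos_on_curve {g d : ℝ → ℝ}
    (hderiv : ∀ t ∈ Set.Icc (0:ℝ) 1, HasDerivAt g (d t) t)
    (hzero : ∀ t ∈ Set.Icc (0:ℝ) 1, g t = 0 → d t < 0)
    (h0 : 0 < g 0) (h1 : 0 < g 1) : ∀ t ∈ Set.Icc (0:ℝ) 1, 0 < g t := by
  by_contra hcon
  push_neg at hcon
  obtain ⟨t₀, ht₀, hgt₀⟩ := hcon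
  set Z := {t : ℝ | t ∈ Set.Icc (0:ℝ) 1 ∧ g t ≤ 0} with hZ
  have hZne : Z.Nonempty := ⟨t₀, ht₀, hgt₀⟩
  have hZbdd : BddAbove Z := ⟨1, fun t ht => ht.1.2⟩
  have hZcl : IsClosed Z := by
    rw [← closure_subset_iff_isClosed]
    intro x hx
    have hxI : x ∈ Set.Icc (0:ℝ) 1 := by
      have : closure Z ⊆ closure (Set.Icc (0:ℝ) 1) :=
        closure_mono (fun t ht => ht.1)
      simpa [isClosed_Icc.closure_eq] using this hx
    refine ⟨hxI, ?_⟩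
    have hNB : (nhdsWithin x Z).NeBot := mem_closure_iff_nhdsWithin_neBot.mp hx
    have htd : Filter.Tendsto g (nhdsWithin x Z) (nhds (g x)) :=
      ((hderiv x hxI).continuousAt).continuousWithinAt.tendsto
    exact le_of_tendsto htd (eventually_nhdsWithin_of_forall fun z hz => hz.2)
  set T := sSup Z with hT
  have hTZ : T ∈ Z := hZcl.csSup_mem hZne hZbdd
  have hTI : T ∈ Set.Icc (0:ℝ) 1 := hTZ.1
  have hT1 : T < 1 := lt_of_le_of_ne hTI.2 (by
    intro hEq; rw [hEq] at hTZ; exact absurd h1 (not_lt.mpr hTZ.2))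
  have hKey : ∀ s ∈ Set.Ioc T 1, 0 < g s := by
    intro s hs
    by_contra hle
    push_neg at hle
    have hsZ : s ∈ Z := ⟨⟨le_trans hTI.1 (le_of_lt hs.1), hs.2⟩, hle⟩
    exact absurd (le_csSup hZbdd hsZ) (not_le.mpr hs.1)
  have hTcl : T ∈ closure (Set.Ioc T 1) := by
    rw [closure_Ioc (ne_of_lt hT1)]
    exact ⟨le_refl T, le_of_lt hT1⟩
  have hNB2 : (nhdsWithin T (Set.Ioc T 1)).NeBot := mem_closure_iff_nhdsWithin_neBot.mp hTcl
  have hgT : g T = 0 := by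
    refine le_antisymm hTZ.2 ?_
    have htd : Filter.Tendsto g (nhdsWithin T (Set.Ioc T 1)) (nhds (g T)) :=
      ((hderiv T hTI).continuousAt).continuousWithinAt.tendsto
    exact ge_of_tendsto htd (eventually_nhdsWithin_of_forall fun s hs => le_of_lt (hKey s hs))
  have hdT : d T < 0 := hzero T hTI hgT
  have hslope := hasDerivAt_iff_tendsto_slope.mp (hderiv T hTI)
  have hev : ∀ᶠ u in nhdsWithin T {T}ᶜ, slope g T u < 0 :=
    hslope.eventually (eventually_lt_nhds hdT)
  have hmono : nhdsWithin T (Set.Ioc T 1) ≤ nhdsWithin T {T}ᶜ :=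
    nhdsWithin_mono T (fun s hs => ne_of_gt hs.1)
  have hev2 : ∀ᶠ u in nhdsWithin T (Set.Ioc T 1),
      slope g T u < 0 ∧ u ∈ Set.Ioc T 1 :=
    (hev.filter_mono hmono).and self_mem_nhdsWithin
  obtain ⟨u, hu1, hu2⟩ := hev2.exists
  have hpos : 0 < slope g T u := by
    rw [slope_def_field, hgT, sub_zero]
    exact div_pos (hKey u hu2) (by linarith [hu2.1])
  linarith

end AuxLemmas

/-- the timelike Hilbert metric is the timelike Finsler metric of
`P_H(p,v) = P₂(p,v) + P₁(p,−v)`: along the straight segment `σ(t) = p + t•(q−p)` the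
velocity is timelike in both Funk structures and `∫₀¹ P_H(σ(t), q−p) dt = H(p,q)`;
moreover every timelike `C¹` curve from `p` to `q` has `P_H`-length at most `H(p,q)`. -/
theorem hilbH_is_finsler {n : ℕ} (hn : 1 ≤ n) (I1 I2 : Set (Euc n))
    (hne1 : I1.Nonempty) (hop1 : IsOpen I1) (hconv1 : Convex ℝ I1)
    (hne2 : I2.Nonempty) (hop2 : IsOpen I2) (hconv2 : Convex ℝ I2)
    (hdisj : Disjoint (closure I1) (closure I2))
    (p q : Euc n) (hp : p ∈ HOmega I1 I2) (hq : q ∈ HOmega I1 I2)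
    (hpq : hilbLt I1 I2 p q) :
    (∀ t ∈ Set.Icc (0:ℝ) 1,
      q - p ∈ Dcone I2 (p + t • (q - p)) ∧ p - q ∈ Dcone I1 (p + t • (q - p))) ∧
    (∫ t in (0:ℝ)..1, hilbP I1 I2 (p + t • (q - p)) (q - p)) = hilbH I1 I2 p q ∧
    (∀ γ γ' : ℝ → Euc n,
      (∀ t ∈ Set.Icc (0:ℝ) 1, HasDerivAt γ (γ' t) t) →
      ContinuousOn γ' (Set.Icc (0:ℝ) 1) →
      γ 0 = p → γ 1 = q →
      (∀ t ∈ Set.Icc (0:ℝ) 1, γ t ∈ HOmega I1 I2) →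
      (∀ t ∈ Set.Icc (0:ℝ) 1, γ' t ∈ Dcone I2 (γ t) ∧ -(γ' t) ∈ Dcone I1 (γ t)) →
      (∫ t in (0:ℝ)..1, hilbP I1 I2 (γ t) (γ' t)) ≤ hilbH I1 I2 p q) := by
  obtain ⟨h2, h1⟩ := hpq
  have hne : p ≠ q := h2.1
  obtain ⟨hτ2, hb2c, hb2I, hw2, h72⟩ := funk_setup hop2 h2
  obtain ⟨hs0, hb1c, hb1I, hw1, h71⟩ := funk_setup hop1 h1
  -- the two τ-computations along the straight segment
  have htau2 : ∀ t ∈ Set.Icc (0:ℝ) 1,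
      tauF I2 (p + t • (q - p)) (q - p) = 1 - t + funkT0 I2 p q := by
    intro t ht
    refine tau_eq (by linarith [ht.2]) ?_ ?_
    · have hid : (p + t • (q - p)) + (1 - t + funkT0 I2 p q) • (q - p)
          = q + funkT0 I2 p q • (q - p) := by module
      rw [hid]; exact hb2c
    · intro s hsp hs
      have hid : (p + t • (q - p)) + s • (q - p) = p + (t + s) • (q - p) := by module
      rw [hid]
      exact h72 (t + s) (by linarith [ht.1]) (by linarith)
  have htau1 : ∀ t ∈ Set.Icc (0:ℝ) 1,
      tauF I1 (p + t • (q - p)) (p - q) = t + funkT0 I1 q p := by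
    intro t ht
    refine tau_eq (by linarith [ht.1]) ?_ ?_
    · have hid : (p + t • (q - p)) + (t + funkT0 I1 q p) • (p - q)
          = p + funkT0 I1 q p • (p - q) := by module
      rw [hid]; exact hb1c
    · intro s hsp hs
      have hid : (p + t • (q - p)) + s • (p - q) = q + (1 - t + s) • (p - q) := by module
      rw [hid]
      exact h71 (1 - t + s) (by linarith [ht.2]) (by linarith)
  have hH : hilbH I1 I2 p q = (Real.log (1 + funkT0 I2 p q) - Real.log (funkT0 I2 p q))
      + (Real.log (1 + funkT0 I1 q p) - Real.log (funkT0 I1 q p)) := by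
    rw [hilbH, funkF_val hop2 h2, funkF_val hop1 h1]
  refine ⟨?_, ?_, ?_⟩
  · -- part 1
    intro t ht
    obtain ⟨-, -, t₂, ht₂, hm2⟩ := h2
    obtain ⟨-, -, t₁, ht₁, hm1⟩ := h1
    constructor
    · refine ⟨1 - t + t₂, by linarith [ht.2], ?_⟩
      have hid : (p + t • (q - p)) + (1 - t + t₂) • (q - p) = q + t₂ • (q - p) := by module
      rw [hid]; exact hm2
    · refine ⟨t + t₁, by linarith [ht.1], ?_⟩
      have hid : (p + t • (q - p)) + (t + t₁) • (p - q) = p + t₁ • (p - q) := by module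
      rw [hid]; exact hm1
  · -- part 2 : integral along the straight segment
    have hEq : Set.EqOn (fun t => hilbP I1 I2 (p + t • (q - p)) (q - p))
        (fun t => (1 - t + funkT0 I2 p q)⁻¹ + (t + funkT0 I1 q p)⁻¹) (Set.uIcc 0 1) := by
      intro t ht
      rw [Set.uIcc_of_le zero_le_one] at ht
      show hilbP I1 I2 (p + t • (q - p)) (q - p) = _
      rw [hilbP, Pmink, Pmink, neg_sub, htau2 t ht, htau1 t ht, one_div, one_div]
    rw [intervalIntegral.integral_congr hEq]
    have hderiv : ∀ t ∈ Set.uIcc (0:ℝ) 1, HasDerivAt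
        (fun t => -Real.log (1 - t + funkT0 I2 p q) + Real.log (t + funkT0 I1 q p))
        ((1 - t + funkT0 I2 p q)⁻¹ + (t + funkT0 I1 q p)⁻¹) t := by
      intro t ht
      rw [Set.uIcc_of_le zero_le_one] at ht
      have e2 : (1:ℝ) - t + funkT0 I2 p q ≠ 0 := ne_of_gt (by linarith [ht.2])
      have e1 : t + funkT0 I1 q p ≠ 0 := ne_of_gt (by linarith [ht.1])
      have d2 : HasDerivAt (fun u : ℝ => 1 - u + funkT0 I2 p q) (-1) t := by
        simpa using ((hasDerivAt_id t).const_sub (1:ℝ)).add_const (funkT0 I2 p q)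
      have d1 : HasDerivAt (fun u : ℝ => u + funkT0 I1 q p) 1 t :=
        (hasDerivAt_id t).add_const _
      have := (d2.log e2).neg.add (d1.log e1)
      refine this.congr_deriv ?_
      field_simp
    have hcont : ContinuousOn
        (fun t : ℝ => (1 - t + funkT0 I2 p q)⁻¹ + (t + funkT0 I1 q p)⁻¹) (Set.uIcc 0 1) := by
      rw [Set.uIcc_of_le zero_le_one]
      apply ContinuousOn.add
      · exact ContinuousOn.inv₀ (by fun_prop)
          (fun t ht => ne_of_gt (by linarith [ht.2]))
      · exact ContinuousOn.inv₀ (by fun_prop)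
          (fun t ht => ne_of_gt (by linarith [ht.1]))
    rw [intervalIntegral.integral_eq_sub_of_hasDerivAt hderiv hcont.intervalIntegrable, hH]
    rw [show (1:ℝ) - 1 + funkT0 I2 p q = funkT0 I2 p q by ring,
      show (1:ℝ) - 0 + funkT0 I2 p q = 1 + funkT0 I2 p q by ring,
      show (0:ℝ) + funkT0 I1 q p = funkT0 I1 q p by ring,
      show (1:ℝ) + funkT0 I1 q p = 1 + funkT0 I1 q p by ring]
    ring
  · -- part 3
    intro γ γ' hγ hγ'c hγ0 hγ1 hγΩ hγD
    obtain ⟨f2, hf2lt, hf2cl, hf2neg⟩ := hyper hop2 hconv2 h2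
    obtain ⟨f1, hf1lt, hf1cl, hf1neg⟩ := hyper hop1 hconv1 h1
    have hA2 : 0 < -f2 (q - p) := by linarith
    have hA1 : 0 < -f1 (p - q) := by linarith
    have hγc : ContinuousOn γ (Set.Icc (0:ℝ) 1) :=
      fun t ht => (hγ t ht).continuousAt.continuousWithinAt
    -- boundary values
    have hg20 : f2 p - f2 (funkB I2 p q) = (1 + funkT0 I2 p q) * (-f2 (q - p)) := by
      rw [← map_sub]
      have hid : p - funkB I2 p q = -((1 + funkT0 I2 p q) • (q - p)) := by
        rw [funkB]; module
      rw [hid, map_neg, map_smul, smul_eq_mul]; ring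
    have hg21 : f2 q - f2 (funkB I2 p q) = funkT0 I2 p q * (-f2 (q - p)) := by
      rw [← map_sub]
      have hid : q - funkB I2 p q = -(funkT0 I2 p q • (q - p)) := by
        rw [funkB]; module
      rw [hid, map_neg, map_smul, smul_eq_mul]; ring
    have hg10 : f1 p - f1 (funkB I1 q p) = funkT0 I1 q p * (-f1 (p - q)) := by
      rw [← map_sub]
      have hid : p - funkB I1 q p = -(funkT0 I1 q p • (p - q)) := by
        rw [funkB]; module
      rw [hid, map_neg, map_smul, smul_eq_mul]; ring
    have hg11 : f1 q - f1 (funkB I1 q p) = (1 + funkT0 I1 q p) * (-f1 (p - q)) := by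
      rw [← map_sub]
      have hid : q - funkB I1 q p = -((1 + funkT0 I1 q p) • (p - q)) := by
        rw [funkB]; module
      rw [hid, map_neg, map_smul, smul_eq_mul]; ring
    -- derivatives of the linear coordinates along the curve
    have hg2' : ∀ t ∈ Set.Icc (0:ℝ) 1,
        HasDerivAt (fun u => f2 (γ u) - f2 (funkB I2 p q)) (f2 (γ' t)) t :=
      fun t ht => ((f2.hasFDerivAt).comp_hasDerivAt t (hγ t ht)).sub_const _
    have hg1' : ∀ t ∈ Set.Icc (0:ℝ) 1,
        HasDerivAt (fun u => f1 (γ u) - f1 (funkB I1 q p)) (f1 (γ' t)) t :=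
      fun t ht => ((f1.hasFDerivAt).comp_hasDerivAt t (hγ t ht)).sub_const _
    -- positivity of the coordinates along the curve
    have hg2pos : ∀ t ∈ Set.Icc (0:ℝ) 1, 0 < f2 (γ t) - f2 (funkB I2 p q) := by
      refine pos_on_curve hg2' ?_ ?_ ?_
      · intro t ht hz
        have hz' : f2 (γ t) - f2 (funkB I2 p q) = 0 := hz
        obtain ⟨s, hs, hm⟩ := (hγD t ht).1
        have hlt := hf2lt _ hm
        rw [map_add, map_smul, smul_eq_mul] at hlt
        by_contra hcon
        push_neg at hcon
        have hsf : 0 ≤ s * f2 (γ' t) := mul_nonneg (le_of_lt hs) hcon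
        linarith
      · show 0 < f2 (γ 0) - f2 (funkB I2 p q)
        rw [hγ0, hg20]
        exact mul_pos (by linarith) hA2
      · show 0 < f2 (γ 1) - f2 (funkB I2 p q)
        rw [hγ1, hg21]
        exact mul_pos hτ2 hA2
    have hg1pos : ∀ t ∈ Set.Icc (0:ℝ) 1, 0 < f1 (γ t) - f1 (funkB I1 q p) := by
      have hrev : ∀ t ∈ Set.Icc (0:ℝ) 1, 0 < f1 (γ (1 - t)) - f1 (funkB I1 q p) := by
        refine pos_on_curve (g := fun u => f1 (γ (1 - u)) - f1 (funkB I1 q p))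
          (d := fun u => -f1 (γ' (1 - u))) ?_ ?_ ?_ ?_
        · intro t ht
          have ht' : 1 - t ∈ Set.Icc (0:ℝ) 1 := ⟨by linarith [ht.2], by linarith [ht.1]⟩
          have hinner : HasDerivAt (fun u : ℝ => 1 - u) (-1) t := by
            simpa using (hasDerivAt_id t).const_sub (1:ℝ)
          have h0 := (hg1' (1 - t) ht').comp t hinner
          simpa [Function.comp_def] using h0
        · intro t ht hz
          have hz' : f1 (γ (1 - t)) - f1 (funkB I1 q p) = 0 := hz
          have ht' : 1 - t ∈ Set.Icc (0:ℝ) 1 := ⟨by linarith [ht.2], by linarith [ht.1]⟩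
          obtain ⟨s, hs, hm⟩ := (hγD (1 - t) ht').2
          have hlt := hf1lt _ hm
          have hid : f1 (γ (1 - t) + s • (-γ' (1 - t)))
              = f1 (γ (1 - t)) - s * f1 (γ' (1 - t)) := by
            rw [map_add, map_smul, map_neg, smul_eq_mul]; ring
          rw [hid] at hlt
          by_contra hcon
          push_neg at hcon
          have hf1le : f1 (γ' (1 - t)) ≤ 0 := by linarith
          have hsf : s * f1 (γ' (1 - t)) ≤ 0 :=
            mul_nonpos_of_nonneg_of_nonpos (le_of_lt hs) hf1le
          linarith
        · show 0 < f1 (γ (1 - 0)) - f1 (funkB I1 q p)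
          rw [show (1:ℝ) - 0 = 1 by norm_num, hγ1, hg11]
          exact mul_pos (by linarith) hA1
        · show 0 < f1 (γ (1 - 1)) - f1 (funkB I1 q p)
          rw [show (1:ℝ) - 1 = 0 by norm_num, hγ0, hg10]
          exact mul_pos hs0 hA1
      intro t ht
      have := hrev (1 - t) ⟨by linarith [ht.2], by linarith [ht.1]⟩
      simpa [show (1:ℝ) - (1 - t) = t by ring] using this
    -- pointwise bounds on the Minkowski functionals
    have hbound2 : ∀ t ∈ Set.Icc (0:ℝ) 1,
        Pmink I2 (γ t) (γ' t) ≤ -f2 (γ' t) / (f2 (γ t) - f2 (funkB I2 p q)) := by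
      intro t ht
      have hΩ := hγΩ t ht
      simp only [HOmega, Set.mem_compl_iff, Set.mem_union, not_or] at hΩ
      obtain ⟨s, hs, hm⟩ := (hγD t ht).1
      obtain ⟨hτp, hτm, -⟩ := tau_spec hΩ.2 ⟨s, hs, subset_closure hm⟩
      have hfb := hf2cl _ hτm
      rw [map_add, map_smul, smul_eq_mul] at hfb
      have hgpos := hg2pos t ht
      rw [Pmink, div_le_div_iff₀ hτp hgpos, one_mul,
        show -f2 (γ' t) * tauF I2 (γ t) (γ' t)
          = -(tauF I2 (γ t) (γ' t) * f2 (γ' t)) from by ring]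
      linarith
    have hbound1 : ∀ t ∈ Set.Icc (0:ℝ) 1,
        Pmink I1 (γ t) (-(γ' t)) ≤ f1 (γ' t) / (f1 (γ t) - f1 (funkB I1 q p)) := by
      intro t ht
      have hΩ := hγΩ t ht
      simp only [HOmega, Set.mem_compl_iff, Set.mem_union, not_or] at hΩ
      obtain ⟨s, hs, hm⟩ := (hγD t ht).2
      obtain ⟨hτp, hτm, -⟩ := tau_spec hΩ.1 ⟨s, hs, subset_closure hm⟩
      have hfb := hf1cl _ hτm
      rw [map_add, map_smul, map_neg, smul_eq_mul, mul_neg] at hfb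
      have hgpos := hg1pos t ht
      rw [Pmink, div_le_div_iff₀ hτp hgpos, one_mul,
        show f1 (γ' t) * tauF I1 (γ t) (-γ' t)
          = -(tauF I1 (γ t) (-γ' t) * -f1 (γ' t)) from by ring]
      linarith
    -- the comparison integrand and its integral
    have hRcont : ContinuousOn (fun t : ℝ =>
        -f2 (γ' t) / (f2 (γ t) - f2 (funkB I2 p q))
          + f1 (γ' t) / (f1 (γ t) - f1 (funkB I1 q p))) (Set.Icc (0:ℝ) 1) := by
      apply ContinuousOn.add
      · apply ContinuousOn.div
        · exact ((f2.continuous.comp_continuousOn hγ'c)).neg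
        · exact (f2.continuous.comp_continuousOn hγc).sub continuousOn_const
        · exact fun t ht => ne_of_gt (hg2pos t ht)
      · apply ContinuousOn.div
        · exact f1.continuous.comp_continuousOn hγ'c
        · exact (f1.continuous.comp_continuousOn hγc).sub continuousOn_const
        · exact fun t ht => ne_of_gt (hg1pos t ht)
    have hRint : IntervalIntegrable (fun t : ℝ =>
        -f2 (γ' t) / (f2 (γ t) - f2 (funkB I2 p q))
          + f1 (γ' t) / (f1 (γ t) - f1 (funkB I1 q p))) MeasureTheory.volume 0 1 := by
      apply ContinuousOn.intervalIntegrable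
      rwa [Set.uIcc_of_le zero_le_one]
    have hGd : ∀ t ∈ Set.uIcc (0:ℝ) 1, HasDerivAt
        (fun u => -Real.log (f2 (γ u) - f2 (funkB I2 p q))
          + Real.log (f1 (γ u) - f1 (funkB I1 q p)))
        (-f2 (γ' t) / (f2 (γ t) - f2 (funkB I2 p q))
          + f1 (γ' t) / (f1 (γ t) - f1 (funkB I1 q p))) t := by
      intro t ht
      rw [Set.uIcc_of_le zero_le_one] at ht
      have d2 := ((hg2' t ht).log (ne_of_gt (hg2pos t ht))).neg
      have d1 := (hg1' t ht).log (ne_of_gt (hg1pos t ht))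
      have := d2.add d1
      refine this.congr_deriv ?_
      rw [neg_div]
    have hGval := intervalIntegral.integral_eq_sub_of_hasDerivAt hGd hRint
    have hRval : (∫ t in (0:ℝ)..1,
        (-f2 (γ' t) / (f2 (γ t) - f2 (funkB I2 p q))
          + f1 (γ' t) / (f1 (γ t) - f1 (funkB I1 q p)))) = hilbH I1 I2 p q := by
      rw [hGval]
      simp only [hγ0, hγ1]
      rw [hg20, hg21, hg10, hg11, hH]
      rw [Real.log_mul (ne_of_gt (by linarith : (0:ℝ) < 1 + funkT0 I2 p q)) (ne_of_gt hA2),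
        Real.log_mul (ne_of_gt hτ2) (ne_of_gt hA2),
        Real.log_mul (ne_of_gt (by linarith : (0:ℝ) < 1 + funkT0 I1 q p)) (ne_of_gt hA1),
        Real.log_mul (ne_of_gt hs0) (ne_of_gt hA1)]
      ring
    by_cases hInt : IntervalIntegrable
        (fun t => hilbP I1 I2 (γ t) (γ' t)) MeasureTheory.volume 0 1
    · calc (∫ t in (0:ℝ)..1, hilbP I1 I2 (γ t) (γ' t))
          ≤ ∫ t in (0:ℝ)..1,
            (-f2 (γ' t) / (f2 (γ t) - f2 (funkB I2 p q))
              + f1 (γ' t) / (f1 (γ t) - f1 (funkB I1 q p))) := by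
            apply intervalIntegral.integral_mono_on zero_le_one hInt hRint
            intro t ht
            exact add_le_add (hbound2 t ht) (hbound1 t ht)
        _ = hilbH I1 I2 p q := hRval
    · rw [intervalIntegral.integral_undef hInt, hH]
      have l2 := Real.log_lt_log hτ2 (by linarith : funkT0 I2 p q < 1 + funkT0 I2 p q)
      have l1 := Real.log_lt_log hs0 (by linarith : funkT0 I1 q p < 1 + funkT0 I1 q p)
      linarith
end
end

section
/- The de Sitter distance equals half the one-dimensional timelike Hilbert distance of the projections: for all real numbers t₁ < t₂, the projections sᵢ = Real.tanh tᵢ of the de Sitter points (sinh tᵢ, cosh tᵢ) satisfy −1 < s₁ < s₂ < 1 and H₍₋₁,₁₎(s₁, s₂) = Real.log (((1 − s₁) * (1 + s₂)) / ((1 − s₂) * (1 + s₁))) = 2 * (t₂ − t₁); hence the de Sitter arc-length distance t₂ − t₁ between the two points equals half the timelike Hilbert distance of their central projections to the interval (−1, 1). -/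
lemma tanh_exp_eq (t : ℝ) :
    Real.tanh t = (Real.exp t - Real.exp (-t)) / (Real.exp t + Real.exp (-t)) := by
  have hd : Real.exp t + Real.exp (-t) ≠ 0 := by positivity
  rw [Real.tanh_eq_sinh_div_cosh, Real.sinh_eq, Real.cosh_eq]
  field_simp

lemma one_sub_tanh (t : ℝ) :
    1 - Real.tanh t = 2 * Real.exp (-t) / (Real.exp t + Real.exp (-t)) := by
  have hd : Real.exp t + Real.exp (-t) ≠ 0 := by positivity
  rw [tanh_exp_eq]; field_simp; ring

lemma one_add_tanh (t : ℝ) :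
    1 + Real.tanh t = 2 * Real.exp t / (Real.exp t + Real.exp (-t)) := by
  have hd : Real.exp t + Real.exp (-t) ≠ 0 := by positivity
  rw [tanh_exp_eq]; field_simp; ring

/-- the de Sitter distance equals half the one-dimensional timelike Hilbert
distance of the central projections: for `t₁ < t₂`, the projections `sᵢ = tanh tᵢ` of the
de Sitter points `(sinh tᵢ, cosh tᵢ)` satisfy `−1 < s₁ < s₂ < 1` and
`H₍₋₁,₁₎(s₁,s₂) = log (((1−s₁)(1+s₂))/((1−s₂)(1+s₁))) = 2 (t₂ − t₁)`; hence the de Sitter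
arc-length distance `t₂ − t₁` equals half the timelike Hilbert distance. -/
theorem deSitter_eq_half_hilbert (t₁ t₂ : ℝ) (h : t₁ < t₂) :
    -1 < Real.tanh t₁ ∧ Real.tanh t₁ < Real.tanh t₂ ∧ Real.tanh t₂ < 1 ∧
    Real.log (((1 - Real.tanh t₁) * (1 + Real.tanh t₂)) /
        ((1 - Real.tanh t₂) * (1 + Real.tanh t₁))) = 2 * (t₂ - t₁) ∧
    t₂ - t₁ = (1 / 2) *
      Real.log (((1 - Real.tanh t₁) * (1 + Real.tanh t₂)) /
        ((1 - Real.tanh t₂) * (1 + Real.tanh t₁))) := by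
  have e1 : (0:ℝ) < Real.exp t₁ := Real.exp_pos _
  have e2 : (0:ℝ) < Real.exp t₂ := Real.exp_pos _
  have e1' : (0:ℝ) < Real.exp (-t₁) := Real.exp_pos _
  have e2' : (0:ℝ) < Real.exp (-t₂) := Real.exp_pos _
  have d1 : (0:ℝ) < Real.exp t₁ + Real.exp (-t₁) := by positivity
  have d2 : (0:ℝ) < Real.exp t₂ + Real.exp (-t₂) := by positivity
  have h1 : -1 < Real.tanh t₁ := by
    have := one_add_tanh t₁
    nlinarith [div_pos (by positivity : (0:ℝ) < 2 * Real.exp t₁) d1]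
  have h3 : Real.tanh t₂ < 1 := by
    have := one_sub_tanh t₂
    nlinarith [div_pos (by positivity : (0:ℝ) < 2 * Real.exp (-t₂)) d2]
  have h2 : Real.tanh t₁ < Real.tanh t₂ := by
    rw [tanh_exp_eq, tanh_exp_eq, div_lt_div_iff₀ d1 d2]
    have key : Real.exp (t₁ - t₂) < Real.exp (t₂ - t₁) :=
      Real.exp_lt_exp.2 (by linarith)
    have h12 : Real.exp t₁ * Real.exp (-t₂) = Real.exp (t₁ - t₂) := by
      rw [← Real.exp_add]; ring_nf
    have h21 : Real.exp t₂ * Real.exp (-t₁) = Real.exp (t₂ - t₁) := by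
      rw [← Real.exp_add]; ring_nf
    nlinarith
  have hlog : Real.log (((1 - Real.tanh t₁) * (1 + Real.tanh t₂)) /
      ((1 - Real.tanh t₂) * (1 + Real.tanh t₁))) = 2 * (t₂ - t₁) := by
    have : ((1 - Real.tanh t₁) * (1 + Real.tanh t₂)) /
        ((1 - Real.tanh t₂) * (1 + Real.tanh t₁)) = Real.exp (2 * (t₂ - t₁)) := by
      rw [one_sub_tanh, one_add_tanh, one_sub_tanh, one_add_tanh]
      have : Real.exp (2 * (t₂ - t₁)) = (Real.exp (-t₁) * Real.exp t₂) / (Real.exp (-t₂) * Real.exp t₁) := by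
        rw [← Real.exp_add, eq_div_iff (by positivity), ← Real.exp_add, ← Real.exp_add]
        ring_nf
      rw [this]
      field_simp
    rw [this, Real.log_exp]
  exact ⟨h1, h2, h3, hlog, by rw [hlog]; ring⟩
end
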